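/- arXiv:2001.07368 — 2 statements merged into one kernel-verified Lean document; each statement's English description precedes it below -/
import Mathlib

section
/- For every real p ≥ 2 there exist a < 0 and τ₀ > 0 such that for every τ > τ₀ the function Z(s) = (1/p')^{p−1} · (1 − 1/(1 + ln τ − s) + a/(1 + ln τ − s)²), defined for s ∈ (−∞, 0), satisfies: Z is continuously differentiable on (−∞,0); Z(s) > 0 and Z'(s) < 0 for all s < 0; Z(s) → (1/p')^{p−1} as s → −∞; and −Z'(s) + (p−1)·Z(s) − (p−1)·Z(s)^{p'} ≥ (1/p')^p · (1 + (p/(2(p−1))) · (1 + ln τ − s)^{−2}) for all s < 0. -/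
open MeasureTheory Real
open scoped InnerProductSpace

private lemma lemA {q x : ℝ} (hq1 : 1 ≤ q) (h0 : 0 ≤ x) (h2 : x ≤ 1/2) :
    (1 - x) ^ (q - 2) ≤ 1 + 4 * x := by
  have hx0 : (0:ℝ) < 1 - x := by linarith
  have h1 : (1 - x) ^ (q - 2) ≤ (1 - x) ^ (-1 : ℝ) :=
    Real.rpow_le_rpow_of_exponent_ge hx0 (by linarith) (by linarith)
  rw [Real.rpow_neg_one] at h1
  have h3 : (1 - x)⁻¹ ≤ 1 + 4 * x := by
    rw [inv_eq_one_div, div_le_iff₀ hx0]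
    nlinarith
  linarith

private lemma lemB {q : ℝ} (hq1 : 1 < q) (hq2 : q ≤ 2) {x : ℝ} (h0 : 0 ≤ x) (h2 : x ≤ 1/2) :
    1 - (q-1)*x - 2*(q-1)*x^2 ≤ (1-x) ^ (q-1) := by
  set G : ℝ → ℝ := fun y => (1-y) ^ (q-1) - (1 - (q-1)*y - 2*(q-1)*y^2) with hGdef
  have hder : ∀ y ∈ Set.Ioo (0:ℝ) (1/2), HasDerivAt G
      ((q-1)*(1 + 4*y) - (q-1)*(1-y)^(q-2)) y := by
    intro y hy
    have hy0 : (1:ℝ) - y ≠ 0 := ne_of_gt (by linarith [hy.2])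
    have h1 : HasDerivAt (fun z : ℝ => 1 - z) (-1) y := (hasDerivAt_id y).const_sub 1
    have h2' := h1.rpow_const (p := q - 1) (Or.inl hy0)
    have ha : HasDerivAt (fun z : ℝ => (q-1)*z) (q-1) y := by
      simpa using (hasDerivAt_id y).const_mul (q-1)
    have hb : HasDerivAt (fun z : ℝ => 2*(q-1)*z^2) (2*(q-1)*(2*y)) y := by
      simpa using (hasDerivAt_pow 2 y).const_mul (2*(q-1))
    have h3 : HasDerivAt (fun z : ℝ => 1 - (q-1)*z - 2*(q-1)*z^2)
        (-(q-1) - 2*(q-1)*(2*y)) y := (ha.const_sub 1).sub hb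
    rw [hGdef]
    exact (h2'.sub h3).congr_deriv (by rw [show q - 1 - 1 = q - 2 by ring]; ring)
  have hcont : ContinuousOn G (Set.Icc 0 (1/2)) := by
    apply Continuous.continuousOn
    apply Continuous.sub
    · exact (continuous_const.sub continuous_id).rpow_const (fun x => Or.inr (by linarith))
    · continuity
  have hmono : MonotoneOn G (Set.Icc (0:ℝ) (1/2)) := by
    apply monotoneOn_of_deriv_nonneg (convex_Icc _ _) hcont
    · intro y hy
      rw [interior_Icc] at hy
      exact ((hder y hy).differentiableAt).differentiableWithinAt
    · intro y hy
      rw [interior_Icc] at hy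
      rw [(hder y hy).deriv]
      have hA := lemA (q := q) (x := y) hq1.le hy.1.le hy.2.le
      have h' : (0:ℝ) ≤ (1 + 4*y) - (1-y)^(q-2) := by linarith
      have h'' := mul_nonneg (by linarith : (0:ℝ) ≤ q - 1) h'
      nlinarith [h'']
  have hG0 : G 0 = 0 := by
    simp [hGdef, Real.one_rpow]
  have h := hmono (Set.mem_Icc.mpr ⟨le_refl 0, by norm_num⟩) (Set.mem_Icc.mpr ⟨h0, h2⟩) h0
  rw [hG0] at h
  simp only [hGdef] at h
  linarith

private lemma lemC {q : ℝ} (hq1 : 1 < q) (hq2 : q ≤ 2) {x : ℝ} (h0 : 0 ≤ x) (h2 : x ≤ 1/2) :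
    (1-x) ^ q ≤ 1 - q*x + q*(q-1)/2*x^2 + 2*q*(q-1)/3*x^3 := by
  set F : ℝ → ℝ := fun y => (1 - q*y + q*(q-1)/2*y^2 + 2*q*(q-1)/3*y^3) - (1-y) ^ q with hFdef
  have hder : ∀ y ∈ Set.Ioo (0:ℝ) (1/2), HasDerivAt F
      (q*((1-y)^(q-1) - (1 - (q-1)*y - 2*(q-1)*y^2))) y := by
    intro y hy
    have hy0 : (1:ℝ) - y ≠ 0 := ne_of_gt (by linarith [hy.2])
    have h1 : HasDerivAt (fun z : ℝ => 1 - z) (-1) y := (hasDerivAt_id y).const_sub 1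
    have h2' := h1.rpow_const (p := q) (Or.inl hy0)
    have ha : HasDerivAt (fun z : ℝ => q*z) q y := by
      simpa using (hasDerivAt_id y).const_mul q
    have hb : HasDerivAt (fun z : ℝ => q*(q-1)/2*z^2) (q*(q-1)/2*(2*y)) y := by
      simpa using (hasDerivAt_pow 2 y).const_mul (q*(q-1)/2)
    have hc : HasDerivAt (fun z : ℝ => 2*q*(q-1)/3*z^3) (2*q*(q-1)/3*(3*y^2)) y := by
      simpa using (hasDerivAt_pow 3 y).const_mul (2*q*(q-1)/3)
    have h3 : HasDerivAt (fun z : ℝ => 1 - q*z + q*(q-1)/2*z^2 + 2*q*(q-1)/3*z^3)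
        (-q + q*(q-1)/2*(2*y) + 2*q*(q-1)/3*(3*y^2)) y := ((ha.const_sub 1).add hb).add hc
    rw [hFdef]
    exact (h3.sub h2').congr_deriv (by ring)
  have hcont : ContinuousOn F (Set.Icc 0 (1/2)) := by
    apply Continuous.continuousOn
    apply Continuous.sub
    · continuity
    · exact (continuous_const.sub continuous_id).rpow_const (fun x => Or.inr (by linarith))
  have hmono : MonotoneOn F (Set.Icc (0:ℝ) (1/2)) := by
    apply monotoneOn_of_deriv_nonneg (convex_Icc _ _) hcont
    · intro y hy
      rw [interior_Icc] at hy
      exact ((hder y hy).differentiableAt).differentiableWithinAt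
    · intro y hy
      rw [interior_Icc] at hy
      rw [(hder y hy).deriv]
      have hB := lemB hq1 hq2 hy.1.le hy.2.le
      have h' : (0:ℝ) ≤ (1-y)^(q-1) - (1 - (q-1)*y - 2*(q-1)*y^2) := by linarith
      have h'' := mul_nonneg (by linarith : (0:ℝ) ≤ q) h'
      nlinarith [h'']
  have hF0 : F 0 = 0 := by
    simp [hFdef, Real.one_rpow]
  have h := hmono (Set.mem_Icc.mpr ⟨le_refl 0, by norm_num⟩) (Set.mem_Icc.mpr ⟨h0, h2⟩) h0
  rw [hF0] at h
  simp only [hFdef] at h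
  linarith

set_option maxHeartbeats 1000000 in
private lemma keylem {q t : ℝ} (hq1 : 1 < q) (hq2 : q ≤ 2) (ht : 27 ≤ t) :
    1 + q/2 * (1/t^2) ≤ q * (1/t^2 + 12/t^3) +
      (q * (1 - (1/t + 6/t^2)) - (1 - (1/t + 6/t^2)) ^ q) / (q - 1) := by
  have ht0 : (0:ℝ) < t := by linarith
  have htne : t ≠ 0 := ne_of_gt ht0
  set x := 1/t with hxdef
  have hx0 : 0 < x := by rw [hxdef]; positivity
  have hx27 : x ≤ 1/27 := by
    rw [hxdef, div_le_div_iff₀ ht0 (by norm_num)]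
    linarith
  have e2 : 1/t^2 = x^2 := by rw [hxdef]; field_simp
  have e4 : 12/t^3 = 12*x^3 := by rw [hxdef]; field_simp
  have e5 : 6/t^2 = 6*x^2 := by rw [hxdef]; field_simp
  rw [e2, e4, e5]
  set δ := x + 6*x^2 with hδdef
  have hδ0 : 0 ≤ δ := by rw [hδdef]; positivity
  have hδhalf : δ ≤ 1/2 := by rw [hδdef]; nlinarith
  have hC := lemC hq1 hq2 hδ0 hδhalf
  have hq1pos : (0:ℝ) < q - 1 := by linarith
  have hq0 : (0:ℝ) < q := by linarith
  have h1 : 1 - q/2*δ^2 - 2*q/3*δ^3 ≤ (q * (1 - δ) - (1 - δ) ^ q) / (q - 1) := by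
    rw [le_div_iff₀ hq1pos]
    have expand : (1 - q/2*δ^2 - 2*q/3*δ^3) * (q - 1)
        = q * (1 - δ) - (1 - q*δ + q*(q-1)/2*δ^2 + 2*q*(q-1)/3*δ^3) := by ring
    rw [expand]
    linarith
  have hmon : x^2/2 + δ^2/2 + 2*δ^3/3 ≤ x^2 + 12*x^3 := by
    have hA : x^4 ≤ (1/27)*x^3 := by nlinarith [pow_pos hx0 3]
    have hB : x^5 ≤ (1/27)*x^4 := by nlinarith [pow_pos hx0 4]
    have hD : x^6 ≤ (1/27)*x^5 := by nlinarith [pow_pos hx0 5]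
    rw [hδdef]
    nlinarith [hA, hB, hD]
  have h3 := mul_le_mul_of_nonneg_left hmon hq0.le
  calc 1 + q/2 * x^2 ≤ q * (x^2 + 12*x^3) + (1 - q/2*δ^2 - 2*q/3*δ^3) := by nlinarith [h3]
    _ ≤ q * (x^2 + 12*x^3) + (q * (1 - δ) - (1 - δ) ^ q) / (q - 1) := by linarith

set_option maxHeartbeats 1000000 in
/-- Lemma 5.1 (9lem2): existence of the comparison function Z with an
additional logarithmic term. -/
theorem log_comparison_lemma (p : ℝ) (hp : 2 ≤ p) :
    ∃ a : ℝ, a < 0 ∧ ∃ τ₀ : ℝ, 0 < τ₀ ∧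
      ∀ τ : ℝ, τ₀ < τ →
        ∀ Z : ℝ → ℝ,
          (∀ s : ℝ, Z s = (1 / (p / (p - 1))) ^ (p - 1) *
              (1 - 1 / (1 + Real.log τ - s) + a / (1 + Real.log τ - s) ^ 2)) →
          ContDiffOn ℝ 1 Z (Set.Iio (0 : ℝ)) ∧
          (∀ s < (0 : ℝ), 0 < Z s) ∧
          (∀ s < (0 : ℝ), deriv Z s < 0) ∧
          Filter.Tendsto Z Filter.atBot (nhds ((1 / (p / (p - 1))) ^ (p - 1))) ∧
          (∀ s < (0 : ℝ),
            (1 / (p / (p - 1))) ^ p *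
                (1 + p / (2 * (p - 1)) * (1 / (1 + Real.log τ - s) ^ 2))
              ≤ -(deriv Z s) + (p - 1) * Z s - (p - 1) * Z s ^ (p / (p - 1))) := by
  have hp1 : (1:ℝ) < p := by linarith
  have hpm : (0:ℝ) < p - 1 := by linarith
  have hpm' : p - 1 ≠ 0 := ne_of_gt hpm
  set q : ℝ := p / (p - 1) with hq
  have hq0 : 0 < q := by rw [hq]; positivity
  have hq1 : 1 < q := by rw [hq, lt_div_iff₀ hpm]; linarith
  have hq2 : q ≤ 2 := by rw [hq, div_le_iff₀ hpm]; linarith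
  set b : ℝ := 1 / q with hb
  have hb0 : 0 < b := by rw [hb]; positivity
  set c : ℝ := b ^ (p - 1) with hc
  set C : ℝ := b ^ p with hCdef
  have hc0 : 0 < c := Real.rpow_pos_of_pos hb0 _
  have hC0 : 0 < C := Real.rpow_pos_of_pos hb0 _
  have hbinv : b⁻¹ = q := by rw [hb, one_div, inv_inv]
  have hcC : c = q * C := by
    rw [hc, hCdef, show p - 1 = p + (-1) by ring, Real.rpow_add hb0, Real.rpow_neg_one, hbinv]
    ring
  have hcq : c ^ q = C := by
    rw [hc, ← Real.rpow_mul hb0.le, hCdef]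
    congr 1
    rw [hq]
    field_simp
  have hq1e : q - 1 = 1/(p-1) := by rw [hq]; field_simp; ring
  have hpq : p - 1 = (q - 1)⁻¹ := by rw [hq1e, one_div, inv_inv]
  refine ⟨-6, by norm_num, Real.exp 26, Real.exp_pos 26, ?_⟩
  intro τ hτ Z hZ
  have hτ0 : 0 < τ := lt_trans (Real.exp_pos 26) hτ
  have hlog : 26 < Real.log τ := (Real.lt_log_iff_exp_lt hτ0).mpr hτ
  set L : ℝ := 1 + Real.log τ with hL
  have hL27 : 27 < L := by rw [hL]; linarith
  have hZfun := funext hZ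
  -- positivity of the bracket
  have hwpos : ∀ s : ℝ, s < 0 → (0:ℝ) < 1 - 1/(L - s) + -6/(L - s)^2 := by
    intro s hs
    have ht : 27 < L - s := by linarith
    have ht0 : 0 < L - s := by linarith
    have h1 : 1/(L - s) ≤ 1/27 := by
      rw [div_le_div_iff₀ ht0 (by norm_num)]; linarith
    have h2 : 6/(L - s)^2 ≤ 6/729 := by
      rw [div_le_div_iff₀ (by positivity) (by norm_num)]
      nlinarith
    have he : (-6:ℝ)/(L - s)^2 = -(6/(L - s)^2) := by ring
    rw [he]
    linarith
  -- derivative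
  have hder : ∀ s : ℝ, s < 0 → HasDerivAt Z (-(c * (1/(L - s)^2 + 12/(L - s)^3))) s := by
    intro s hs
    have ht0 : 0 < L - s := by linarith
    have htne : L - s ≠ 0 := ne_of_gt ht0
    have h1 : HasDerivAt (fun x : ℝ => L - x) (-1) s := (hasDerivAt_id s).const_sub L
    have hA : HasDerivAt (fun x : ℝ => 1/(L - x)) ((0*(L-s) - 1*(-1))/(L-s)^2) s :=
      (hasDerivAt_const s (1:ℝ)).div h1 htne
    have h4 : HasDerivAt (fun x : ℝ => (-6:ℝ)/(L - x)^2)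
        ((0 * ((L - s)^2) - (-6) * ((2:ℕ) * (L - s)^(2-1) * (-1))) / ((L - s)^2)^2) s :=
      (hasDerivAt_const s (-6:ℝ)).div (h1.pow 2) (pow_ne_zero 2 htne)
    have h5 := (((hasDerivAt_const s (1:ℝ)).sub hA).add h4).const_mul c
    rw [hZfun]
    exact h5.congr_deriv (by push_cast; field_simp; ring)
  refine ⟨?_, ?_, ?_, ?_, ?_⟩
  · -- ContDiffOn
    rw [hZfun]
    have hne : ∀ x ∈ Set.Iio (0:ℝ), L - x ≠ 0 := by
      intro x hx
      simp only [Set.mem_Iio] at hx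
      have : 0 < L - x := by linarith
      exact ne_of_gt this
    apply ContDiffOn.mul contDiffOn_const
    apply ContDiffOn.add
    · exact ContDiffOn.sub contDiffOn_const
        (ContDiffOn.div contDiffOn_const (contDiffOn_const.sub contDiffOn_id) hne)
    · exact ContDiffOn.div contDiffOn_const ((contDiffOn_const.sub contDiffOn_id).pow 2)
        (fun x hx => pow_ne_zero 2 (hne x hx))
  · intro s hs
    rw [hZ s]
    exact mul_pos hc0 (hwpos s hs)
  · intro s hs
    rw [(hder s hs).deriv]
    have ht0 : 0 < L - s := by linarith
    have hpos : 0 < c * (1/(L - s)^2 + 12/(L - s)^3) := by positivity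
    linarith
  · -- Tendsto
    rw [hZfun]
    have hLt : Filter.Tendsto (fun s : ℝ => L - s) Filter.atBot Filter.atTop := by
      have h0 := Filter.tendsto_neg_atBot_atTop (G := ℝ)
      have h := Filter.tendsto_atTop_add_const_left Filter.atBot L h0
      simpa [sub_eq_add_neg] using h
    have h1 : Filter.Tendsto (fun s : ℝ => 1/(L - s)) Filter.atBot (nhds 0) := by
      simpa [one_div, Pi.inv_def] using hLt.inv_tendsto_atTop
    have h2 : Filter.Tendsto (fun s : ℝ => (-6:ℝ)/(L - s)^2) Filter.atBot (nhds 0) := by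
      have hsq : Filter.Tendsto (fun s : ℝ => (L - s)^2) Filter.atBot Filter.atTop :=
        (Filter.tendsto_pow_atTop (two_ne_zero)).comp hLt
      have h6 := (hsq.inv_tendsto_atTop).const_mul (-6 : ℝ)
      simpa [div_eq_mul_inv] using h6
    have hone : Filter.Tendsto (fun _ : ℝ => (1:ℝ)) Filter.atBot (nhds 1) := tendsto_const_nhds
    have h7 := ((hone.sub h1).add h2).const_mul c
    simpa using h7
  · -- main inequality
    intro s hs
    have ht27 : (27:ℝ) ≤ L - s := by linarith
    have ht0 : 0 < L - s := by linarith
    have hDer0 := (hder s hs).deriv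
    have hZ0 := hZ s
    set t : ℝ := L - s with htdef
    have hkey := keylem hq1 hq2 ht27
    set δ : ℝ := 1/t + 6/t^2 with hδdef
    have hw : (1:ℝ) - 1/t + -6/t^2 = 1 - δ := by rw [hδdef]; ring
    have hw0 : 0 < 1 - δ := by
      have h := hwpos s hs
      rw [← htdef] at h
      rw [← hw]; exact h
    have hZs : Z s = c * (1 - δ) := by rw [hZ0, hw]
    have hZq : Z s ^ q = C * (1 - δ) ^ q := by
      rw [hZs, Real.mul_rpow hc0.le hw0.le, hcq]
    have hDer : deriv Z s = -(c * (1/t^2 + 12/t^3)) := hDer0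
    have hhalf : p / (2 * (p - 1)) = q / 2 := by rw [hq, div_div, mul_comm]
    have hrw : (q*(1-δ) - (1-δ)^q)/(q-1) = (p-1)*(q*(1-δ) - (1-δ)^q) := by
      rw [div_eq_mul_inv, ← hpq]; ring
    rw [hhalf, hDer, hZq, hZs]
    calc C * (1 + q/2 * (1/t^2))
        ≤ C * (q * (1/t^2 + 12/t^3) + (q * (1 - δ) - (1 - δ) ^ q) / (q - 1)) := by
          exact mul_le_mul_of_nonneg_left hkey hC0.le
      _ = -(-(c * (1/t^2 + 12/t^3))) + (p - 1) * (c * (1 - δ)) - (p - 1) * (C * (1 - δ) ^ q) := by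
          rw [hrw, hcC]
          ring
end

section
/- Let p > 1, n ≥ 2 and δ with 1 < δ < n and δ ≠ p. Then for all real r, R with 0 < r < R: |(p−δ)/p|^p · r^{(1−δ)p/(p−1)} · |R^{(p−δ)/(p−1)} − r^{(p−δ)/(p−1)}|^{−p} ≥ ((p−1)/p)^p · (R − r)^{−p}. -/
open Real

/-- Pointwise comparison of the doubly singular Hardy weight with the
distance-to-the-boundary weight (Proposition 3.6 (i), inequality (10eq15-2)). -/
theorem weight_comparison
    (p : ℝ) (hp : 1 < p)
    {n : ℕ} (hn : 2 ≤ n)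
    (δ : ℝ) (hδ1 : 1 < δ) (hδn : δ < n) (hδp : δ ≠ p)
    (r R : ℝ) (hr : 0 < r) (hrR : r < R) :
    ((p - 1) / p) ^ p * (R - r) ^ (-p)
      ≤ |(p - δ) / p| ^ p * r ^ ((1 - δ) * p / (p - 1)) *
          |R ^ ((p - δ) / (p - 1)) - r ^ ((p - δ) / (p - 1))| ^ (-p) := by
  have hp0 : (0:ℝ) < p := lt_trans one_pos hp
  have hp1 : (0:ℝ) < p - 1 := sub_pos.mpr hp
  set α : ℝ := (p - δ) / (p - 1) with hαdef
  have hpδ : p - δ ≠ 0 := sub_ne_zero.mpr (Ne.symm hδp)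
  have hαne : α ≠ 0 := div_ne_zero hpδ (ne_of_gt hp1)
  have hR0 : 0 < R := hr.trans hrR
  have hRr : 0 < R - r := sub_pos.mpr hrR
  -- MVT: (R^α - r^α)/(R-r) = α c^(α-1) for some c ∈ (r,R)
  obtain ⟨c, hc, hder⟩ :=
    exists_hasDerivAt_eq_slope (fun x => x ^ α) (fun x => α * x ^ (α - 1)) hrR
      (fun x hx => (Real.continuousAt_rpow_const x α
        (Or.inl (ne_of_gt (lt_of_lt_of_le hr hx.1)))).continuousWithinAt)
      (fun x hx => Real.hasDerivAt_rpow_const (Or.inl (ne_of_gt (hr.trans hx.1))))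
  have hc0 : 0 < c := hr.trans hc.1
  have hcr : r ≤ c := hc.1.le
  have hEq : R ^ α - r ^ α = α * c ^ (α - 1) * (R - r) := by
    field_simp at hder
    linarith [hder]
  have hcp : (0:ℝ) < c ^ (α - 1) := Real.rpow_pos_of_pos hc0 _
  have hAeq : |R ^ α - r ^ α| = |α| * c ^ (α - 1) * (R - r) := by
    rw [hEq, abs_mul, abs_mul, abs_of_pos hcp, abs_of_pos hRr]
  have hApos : 0 < |R ^ α - r ^ α| := by
    rw [hAeq]
    positivity
  have hcle : c ^ (α - 1) ≤ r ^ (α - 1) := by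
    apply Real.rpow_le_rpow_of_nonpos hr hcr
    have : α ≤ 1 := by
      rw [hαdef, div_le_one hp1]; linarith
    linarith
  have hαpos : 0 < |α| := abs_pos.mpr hαne
  have hA : |R ^ α - r ^ α| ≤ |α| * r ^ (α - 1) * (R - r) := by
    rw [hAeq]
    have := mul_le_mul_of_nonneg_left hcle hαpos.le
    nlinarith
  have hBpos : 0 < |α| * r ^ (α - 1) * (R - r) := by positivity
  -- antitone in base for negative exponent
  have hmono : (|α| * r ^ (α - 1) * (R - r)) ^ (-p) ≤ |R ^ α - r ^ α| ^ (-p) :=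
    Real.rpow_le_rpow_of_nonpos hApos hA (by linarith)
  have hrp : 0 < r ^ ((1 - δ) * p / (p - 1)) := Real.rpow_pos_of_pos hr _
  have hK : 0 ≤ |(p - δ) / p| ^ p := Real.rpow_nonneg (abs_nonneg _) _
  calc ((p - 1) / p) ^ p * (R - r) ^ (-p)
      = |(p - δ) / p| ^ p * r ^ ((1 - δ) * p / (p - 1)) *
          (|α| * r ^ (α - 1) * (R - r)) ^ (-p) := by
        rw [Real.mul_rpow (by positivity) hRr.le, Real.mul_rpow hαpos.le (by positivity),
          ← Real.rpow_mul hr.le]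
        have hexp : (1 - δ) * p / (p - 1) + (α - 1) * (-p) = 0 := by
          rw [hαdef]; field_simp; ring
        have hr1 : r ^ ((1 - δ) * p / (p - 1)) * r ^ ((α - 1) * (-p)) = 1 := by
          rw [← Real.rpow_add hr, hexp, Real.rpow_zero]
        have hbase : |(p - δ) / p| / |α| = (p - 1) / p := by
          rw [hαdef, abs_div, abs_div, abs_of_pos hp0, abs_of_pos hp1]
          have h0 : |p - δ| ≠ 0 := abs_ne_zero.mpr hpδ
          field_simp
        have hKα : |(p - δ) / p| ^ p * |α| ^ (-p) = ((p - 1) / p) ^ p := by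
          rw [Real.rpow_neg (abs_nonneg _), ← div_eq_mul_inv,
            ← Real.div_rpow (abs_nonneg _) (abs_nonneg _), hbase]
        have hre : |(p - δ) / p| ^ p * r ^ ((1 - δ) * p / (p - 1)) *
            (|α| ^ (-p) * r ^ ((α - 1) * (-p)) * (R - r) ^ (-p))
            = (|(p - δ) / p| ^ p * |α| ^ (-p)) *
              (r ^ ((1 - δ) * p / (p - 1)) * r ^ ((α - 1) * (-p))) * (R - r) ^ (-p) := by
          ring
        rw [hre, hKα, hr1, mul_one]
    _ ≤ |(p - δ) / p| ^ p * r ^ ((1 - δ) * p / (p - 1)) *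
          |R ^ α - r ^ α| ^ (-p) := by
        apply mul_le_mul_of_nonneg_left hmono (by positivity)
end
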